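/- Let E be a module over A = ℂ⟨a,b⟩/(ab - ba - b^2) which is free of finite rank over ℂ[[b]], and suppose there exists k ∈ ℕ* with a^k·E ⊂ b·E. Then for every x ∈ E the sequence of partial sums Σ_{m=0}^{N} c_m·a^m·x (c_m ∈ ℂ) converges in the b-adic topology of E; equivalently, E is complete for the decreasing filtration (a^m·E)_{m∈ℕ}, so that ℂ[[a]] acts on E. -/

import Mathlib

set_option linter.unusedSectionVars false
set_option maxHeartbeats 1000000

open PowerSeries

section Aux

variable {E : Type*} [AddCommGroup E] [Module ℂ E]
    [Module (PowerSeries ℂ) E] [IsScalarTower ℂ (PowerSeries ℂ) E]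

/-- Hausdorff property of the `X`-adic filtration on a finite free module. -/
lemma aux_haus [Module.Free (PowerSeries ℂ) E] [Module.Finite (PowerSeries ℂ) E]
    (z : E) (h : ∀ N : ℕ, ∃ e : E, z = (X : PowerSeries ℂ) ^ N • e) : z = 0 := by
  classical
  let b := Module.Free.chooseBasis (PowerSeries ℂ) E
  apply b.repr.injective
  rw [map_zero]
  ext i d
  have hdvd : ∀ N : ℕ, (X : PowerSeries ℂ) ^ N ∣ b.repr z i := by
    intro N
    obtain ⟨e, he⟩ := h N
    exact ⟨b.repr e i, by rw [he, map_smul, Finsupp.smul_apply, smul_eq_mul]⟩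
  simp only [Finsupp.coe_zero, Pi.zero_apply, map_zero]
  exact (PowerSeries.X_pow_dvd_iff.mp (hdvd (d + 1))) d (Nat.lt_succ_self d)

/-- Precompleteness of the `X`-adic filtration on a finite free module. -/
lemma aux_precomp [Module.Free (PowerSeries ℂ) E] [Module.Finite (PowerSeries ℂ) E]
    (f : ℕ → E)
    (hf : ∀ m n : ℕ, m ≤ n → ∃ e : E, f n - f m = (X : PowerSeries ℂ) ^ m • e) :
    ∃ y : E, ∀ N : ℕ, ∃ e : E, y - f N = (X : PowerSeries ℂ) ^ N • e := by
  classical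
  let b := Module.Free.chooseBasis (PowerSeries ℂ) E
  set p : Module.Free.ChooseBasisIndex (PowerSeries ℂ) E → ℕ → PowerSeries ℂ :=
    fun i n => b.repr (f n) i with hp
  have hcoeff : ∀ m n : ℕ, m ≤ n → ∀ i d, d < m →
      PowerSeries.coeff d (p i n) = PowerSeries.coeff d (p i m) := by
    intro m n hmn i d hd
    obtain ⟨e, he⟩ := hf m n hmn
    have hsub : p i n - p i m = (X : PowerSeries ℂ) ^ m * b.repr e i := by
      rw [hp]
      simp only
      rw [← Finsupp.sub_apply, ← map_sub, he, map_smul, Finsupp.smul_apply, smul_eq_mul]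
    have : PowerSeries.coeff d (p i n - p i m) = 0 :=
      PowerSeries.X_pow_dvd_iff.mp ⟨b.repr e i, hsub⟩ d hd
    rw [map_sub, sub_eq_zero] at this
    exact this
  set L : Module.Free.ChooseBasisIndex (PowerSeries ℂ) E → PowerSeries ℂ :=
    fun i => PowerSeries.mk fun d => PowerSeries.coeff d (p i (d + 1)) with hL
  have key : ∀ i N, (X : PowerSeries ℂ) ^ N ∣ (L i - p i N) := by
    intro i N
    rw [PowerSeries.X_pow_dvd_iff]
    intro d hd
    rw [map_sub, hL]
    simp only [PowerSeries.coeff_mk]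
    rw [hcoeff (d + 1) (max (d + 1) N) (le_max_left _ _) i d (Nat.lt_succ_self d) |>.symm,
      hcoeff N (max (d + 1) N) (le_max_right _ _) i d hd |>.symm, sub_self]
  refine ⟨∑ i, L i • b i, fun N => ?_⟩
  refine ⟨∑ i, ((key i N).choose) • b i, ?_⟩
  apply b.repr.injective
  ext i
  rw [map_sub, map_smul, Finsupp.sub_apply, Finsupp.smul_apply, smul_eq_mul]
  rw [b.repr_sum_self, b.repr_sum_self]
  exact congrArg (PowerSeries.coeff _) (key i N).choose_spec

/-- Sums of elements of `X^N • E` lie in `X^N • E`. -/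
lemma aux_sum {ι : Type*} (t : Finset ι) (g : ι → E) (r : PowerSeries ℂ)
    (h : ∀ i ∈ t, ∃ f : E, g i = r • f) : ∃ f : E, ∑ i ∈ t, g i = r • f := by
  classical
  induction t using Finset.induction_on with
  | empty => exact ⟨0, by simp⟩
  | insert _ _ hni ih =>
    obtain ⟨f1, hf1⟩ := h _ (Finset.mem_insert_self _ _)
    obtain ⟨f2, hf2⟩ := ih fun i hi => h i (Finset.mem_insert_of_mem hi)
    exact ⟨f1 + f2, by rw [Finset.sum_insert hni, hf1, hf2, smul_add]⟩

variable (a : E →ₗ[ℂ] E)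
    (hcomm : ∀ e : E, a ((X : PowerSeries ℂ) • e) - (X : PowerSeries ℂ) • a e =
      ((X * X : PowerSeries ℂ)) • e)

include hcomm

lemma aux_comm1 (e : E) : a ((X : PowerSeries ℂ) • e) =
    (X : PowerSeries ℂ) • a e + ((X * X : PowerSeries ℂ)) • e := by
  have h := hcomm e
  rw [sub_eq_iff_eq_add] at h
  rw [h, add_comm]

lemma aux_pow_smul (m : ℕ) (e : E) :
    a ((X : PowerSeries ℂ) ^ m • e) =
      (X : PowerSeries ℂ) ^ m • a e + m • ((X : PowerSeries ℂ) ^ (m + 1) • e) := by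
  induction m generalizing e with
  | zero => simp
  | succ m ih =>
    have h1 : (X : PowerSeries ℂ) ^ (m + 1) • e =
        (X : PowerSeries ℂ) • ((X : PowerSeries ℂ) ^ m • e) := by
      rw [smul_smul, ← pow_succ']
    rw [h1, aux_comm1 a hcomm, ih, smul_add, smul_comm ((X : PowerSeries ℂ)) (m : ℕ),
      smul_smul, smul_smul, smul_smul, succ_nsmul]
    have e1 : (X : PowerSeries ℂ) * (X : PowerSeries ℂ) ^ m = (X : PowerSeries ℂ) ^ (m + 1) := by
      rw [← pow_succ']
    have e2 : (X : PowerSeries ℂ) * (X : PowerSeries ℂ) ^ (m + 1) =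
        (X : PowerSeries ℂ) ^ (m + 1 + 1) := by rw [← pow_succ']
    have e3 : (X * X : PowerSeries ℂ) * (X : PowerSeries ℂ) ^ m =
        (X : PowerSeries ℂ) ^ (m + 1 + 1) := by ring
    rw [e1, e2, e3]
    abel

lemma aux_map_pow (m : ℕ) (e : E) : ∃ f : E,
    a ((X : PowerSeries ℂ) ^ m • e) = (X : PowerSeries ℂ) ^ m • f := by
  refine ⟨a e + m • ((X : PowerSeries ℂ) • e), ?_⟩
  rw [aux_pow_smul a hcomm, smul_add, smul_comm ((X : PowerSeries ℂ) ^ m) (m : ℕ),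
    smul_smul, ← pow_succ]

lemma aux_powmap_pow (j m : ℕ) (e : E) : ∃ f : E,
    (a ^ j) ((X : PowerSeries ℂ) ^ m • e) = (X : PowerSeries ℂ) ^ m • f := by
  induction j generalizing e with
  | zero => exact ⟨e, by simp⟩
  | succ j ih =>
    obtain ⟨f, hf⟩ := ih e
    obtain ⟨g, hg⟩ := aux_map_pow a hcomm m f
    exact ⟨g, by rw [pow_succ', Module.End.mul_apply, hf, hg]⟩

lemma aux_powmap_pow' (j m : ℕ) (e : E) : ∃ f : E,
    (a ^ j) ((X : PowerSeries ℂ) ^ m • e) =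
      (X : PowerSeries ℂ) ^ m • ((a ^ j) e) + (X : PowerSeries ℂ) ^ (m + 1) • f := by
  induction j generalizing e with
  | zero => exact ⟨0, by simp⟩
  | succ j ih =>
    obtain ⟨f, hf⟩ := ih e
    obtain ⟨g, hg⟩ := aux_map_pow a hcomm (m + 1) f
    refine ⟨m • ((a ^ j) e) + g, ?_⟩
    rw [pow_succ', Module.End.mul_apply, hf, map_add, hg, aux_pow_smul a hcomm,
      smul_add, smul_comm ((X : PowerSeries ℂ) ^ (m + 1)) (m : ℕ)]
    simp only [pow_succ', Module.End.mul_apply]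
    abel

lemma aux_kpow (k : ℕ)
    (hpole : ∀ e : E, ∃ e' : E, (a ^ k) e = (X : PowerSeries ℂ) • e') (m : ℕ) (e : E) :
    ∃ f : E, (a ^ (k * m)) e = (X : PowerSeries ℂ) ^ m • f := by
  induction m generalizing e with
  | zero => exact ⟨e, by simp⟩
  | succ m ih =>
    obtain ⟨f₁, hf₁⟩ := ih e
    obtain ⟨f₂, hf₂⟩ := aux_powmap_pow' a hcomm k m f₁
    obtain ⟨f₃, hf₃⟩ := hpole f₁
    refine ⟨f₃ + f₂, ?_⟩
    have hsplit : (a ^ (k * (m + 1))) e = (a ^ k) ((a ^ (k * m)) e) := by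
      rw [← Module.End.mul_apply, ← pow_add]
      congr 1
      ring
    rw [hsplit, hf₁, hf₂, hf₃, smul_smul, ← pow_succ, smul_add]

lemma aux_pow_le (k : ℕ)
    (hpole : ∀ e : E, ∃ e' : E, (a ^ k) e = (X : PowerSeries ℂ) • e')
    (N n : ℕ) (h : k * N ≤ n) (e : E) :
    ∃ f : E, (a ^ n) e = (X : PowerSeries ℂ) ^ N • f := by
  obtain ⟨f₁, hf₁⟩ := aux_kpow a hcomm k hpole N e
  obtain ⟨f₂, hf₂⟩ := aux_powmap_pow a hcomm (n - k * N) N f₁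
  refine ⟨f₂, ?_⟩
  have hsplit : (a ^ n) e = (a ^ (n - k * N)) ((a ^ (k * N)) e) := by
    rw [← Module.End.mul_apply, ← pow_add, Nat.sub_add_cancel h]
  rw [hsplit, hf₁, hf₂]

end Aux

/-- Let `E` be a module over `A = ℂ⟨a,b⟩/(ab-ba-b²)` which is free of finite rank over
`ℂ[[b]]` (where `b` acts as multiplication by the power-series variable and `a` is a
ℂ-linear operator with `a∘b - b∘a = b²`), and suppose `a^k·E ⊂ b·E` for some `k ≥ 1`.
Then every series `Σ c_m·a^m·x` converges in the `b`-adic topology of `E`; equivalently,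
`E` is complete for the decreasing filtration `(a^m·E)`, so that `ℂ[[a]]` acts on `E`. -/
theorem a_adic_complete (E : Type*) [AddCommGroup E] [Module ℂ E]
    [Module (PowerSeries ℂ) E] [IsScalarTower ℂ (PowerSeries ℂ) E]
    [Module.Free (PowerSeries ℂ) E] [Module.Finite (PowerSeries ℂ) E]
    (a : E →ₗ[ℂ] E)
    (hcomm : ∀ e : E, a ((PowerSeries.X : PowerSeries ℂ) • e) -
        (PowerSeries.X : PowerSeries ℂ) • a e =
        ((PowerSeries.X * PowerSeries.X : PowerSeries ℂ)) • e)
    (k : ℕ) (hk : 0 < k)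
    (hpole : ∀ e : E, ∃ e' : E, (a ^ k) e = (PowerSeries.X : PowerSeries ℂ) • e') :
    (∀ (c : ℕ → ℂ) (x : E), ∃ y : E, ∀ N : ℕ, ∃ M : ℕ, ∀ n ≥ M,
      ∃ e' : E, y - ∑ i ∈ Finset.range n, c i • (a ^ i) x =
        ((PowerSeries.X : PowerSeries ℂ) ^ N) • e') ∧
    (∀ x : ℕ → E, (∀ m, x (m + 1) - x m ∈ LinearMap.range (a ^ m)) →
      ∃ y : E, ∀ m, y - x m ∈ LinearMap.range (a ^ m)) := by
  constructor
  · -- Part 1 : convergence of the series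
    intro c x
    set s : ℕ → E := fun n => ∑ i ∈ Finset.range n, c i • (a ^ i) x with hs
    have hcauchy : ∀ N m n : ℕ, k * N ≤ m → m ≤ n →
        ∃ e : E, s n - s m = (X : PowerSeries ℂ) ^ N • e := by
      intro N m n hm hmn
      have hsum : s n - s m = ∑ i ∈ Finset.Ico m n, c i • (a ^ i) x := by
        rw [hs]
        exact (Finset.sum_Ico_eq_sub _ hmn).symm
      rw [hsum]
      apply aux_sum
      intro i hi
      obtain ⟨f, hf⟩ := aux_pow_le a hcomm k hpole N i
        (le_trans hm (Finset.mem_Ico.mp hi).1) x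
      exact ⟨c i • f, by rw [hf, smul_comm]⟩
    obtain ⟨y, hy⟩ := aux_precomp (fun N => s (k * N))
      (fun m n hmn => hcauchy m (k * m) (k * n) le_rfl (Nat.mul_le_mul_left k hmn))
    refine ⟨y, fun N => ⟨k * N, fun n hn => ?_⟩⟩
    obtain ⟨e₁, he₁⟩ := hy N
    obtain ⟨e₂, he₂⟩ := hcauchy N (k * N) n le_rfl hn
    refine ⟨e₁ - e₂, ?_⟩
    have : y - s n = (y - s (k * N)) - (s n - s (k * N)) := by abel
    rw [this, he₁, he₂, smul_sub]
  · -- Part 2 : completeness for the filtration (aᵐE)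
    intro x hx
    simp only [LinearMap.mem_range] at hx
    choose d hd using hx
    set S : ℕ → ℕ → E := fun m M => ∑ j ∈ Finset.range M, (a ^ j) (d (m + j)) with hS
    have hScauchy : ∀ m N M M' : ℕ, k * N ≤ M → M ≤ M' →
        ∃ e : E, S m M' - S m M = (X : PowerSeries ℂ) ^ N • e := by
      intro m N M M' hM hMM
      have hsum : S m M' - S m M = ∑ j ∈ Finset.Ico M M', (a ^ j) (d (m + j)) := by
        rw [hS]
        exact (Finset.sum_Ico_eq_sub _ hMM).symm
      rw [hsum]
      apply aux_sum
      intro j hj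
      exact aux_pow_le a hcomm k hpole N j (le_trans hM (Finset.mem_Ico.mp hj).1) (d (m + j))
    have ht : ∀ m : ℕ, ∃ t : E, ∀ N : ℕ, ∃ e : E,
        t - S m (k * N) = (X : PowerSeries ℂ) ^ N • e := by
      intro m
      exact aux_precomp (fun N => S m (k * N))
        (fun p q hpq => hScauchy m p (k * p) (k * q) le_rfl (Nat.mul_le_mul_left k hpq))
    choose t htt using ht
    have hstep : ∀ m M : ℕ, S m (M + 1) = d m + a (S (m + 1) M) := by
      intro m M
      have h0 : S m (M + 1) = (∑ j ∈ Finset.range M, (a ^ (j + 1)) (d (m + (j + 1)))) +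
          (a ^ 0) (d (m + 0)) := by
        rw [hS]
        exact Finset.sum_range_succ' _ M
      have h1 : ∀ j : ℕ, (a ^ (j + 1)) (d (m + (j + 1))) = a ((a ^ j) (d (m + 1 + j))) := by
        intro j
        have hjm : m + (j + 1) = m + 1 + j := by omega
        rw [hjm, pow_succ', Module.End.mul_apply]
      rw [h0]
      simp only [h1, pow_zero, Module.End.one_apply, add_zero]
      rw [← map_sum, add_comm]
    have hrec : ∀ m : ℕ, t m = d m + a (t (m + 1)) := by
      intro m
      have hz : ∀ N : ℕ, ∃ e : E,
          t m - (d m + a (t (m + 1))) = (X : PowerSeries ℂ) ^ N • e := by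
        intro N
        obtain ⟨e₁, he₁⟩ := htt m N
        obtain ⟨e₂, he₂⟩ := htt (m + 1) N
        obtain ⟨e₂', he₂'⟩ := aux_map_pow a hcomm N e₂
        obtain ⟨e₃, he₃⟩ := aux_pow_le a hcomm k hpole N (k * N) le_rfl (d (m + k * N))
        refine ⟨e₁ - e₂' - e₃, ?_⟩
        have h4 : S m (k * N + 1) - S m (k * N) = (a ^ (k * N)) (d (m + k * N)) := by
          rw [hS]
          simp [Finset.sum_range_succ]
        have h5 : a (t (m + 1)) - a (S (m + 1) (k * N)) = (X : PowerSeries ℂ) ^ N • e₂' := by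
          rw [← map_sub, he₂, he₂']
        calc t m - (d m + a (t (m + 1)))
            = (t m - S m (k * N)) - (a (t (m + 1)) - a (S (m + 1) (k * N))) -
              (S m (k * N + 1) - S m (k * N)) := by
              rw [hstep m (k * N)]
              abel
          _ = (X : PowerSeries ℂ) ^ N • e₁ - (X : PowerSeries ℂ) ^ N • e₂' -
              (X : PowerSeries ℂ) ^ N • e₃ := by rw [he₁, h5, h4, he₃]
          _ = (X : PowerSeries ℂ) ^ N • (e₁ - e₂' - e₃) := by rw [smul_sub, smul_sub]
      exact sub_eq_zero.mp (aux_haus _ fun N => hz N)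
    refine ⟨x 0 + t 0, fun m => ?_⟩
    have hmain : ∀ m : ℕ, x 0 + t 0 - x m = (a ^ m) (t m) := by
      intro m
      induction m with
      | zero => simp
      | succ m ih =>
        have h6 : x 0 + t 0 - x (m + 1) = (a ^ m) (t m) - (a ^ m) (d m) := by
          rw [← ih, hd m]
          abel
        have h7 : t m - d m = a (t (m + 1)) := by
          rw [hrec m]
          abel
        rw [h6, ← map_sub, h7, ← Module.End.mul_apply, ← pow_succ]
    exact LinearMap.mem_range.mpr ⟨t m, (hmain m).symm⟩
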